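/- The function F(A) = Σᵢ₌₁ⁿ arctan λᵢ(A) is concave on the cone of positive semidefinite real symmetric n×n matrices: for all positive semidefinite symmetric A, B and all t ∈ [0,1], F(tA + (1−t)B) ≥ t·F(A) + (1−t)·F(B). -/

import Mathlib

open Set Metric MeasureTheory Filter
open scoped Topology NNReal RealInnerProductSpace

noncomputable section

abbrev Euc (n : ℕ) := EuclideanSpace ℝ (Fin n)

/-- `F(A) = ∑ arctan λᵢ(A)` for a symmetric matrix `A` (junk value `0` otherwise). -/
noncomputable def lagrangianAngle (n : ℕ) (A : Matrix (Fin n) (Fin n) ℝ) : ℝ :=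
  if hA : A.IsHermitian then ∑ i, Real.arctan (hA.eigenvalues i) else 0

/-- The Hessian matrix `D²u(x)` of `u` at `x`. -/
noncomputable def hessian (n : ℕ) (u : Euc n → ℝ) (x : Euc n) : Matrix (Fin n) (Fin n) ℝ :=
  Matrix.of fun i j =>
    fderiv ℝ (fun y => fderiv ℝ u y (EuclideanSpace.single i 1)) x (EuclideanSpace.single j 1)

def ViscositySubsolution (n : ℕ) (Ω : Set (Euc n)) (u ψ : Euc n → ℝ) : Prop :=
  ∀ φ : Euc n → ℝ, ContDiff ℝ 2 φ → ∀ x₀ ∈ Ω,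
    IsLocalMaxOn (fun x => u x - φ x) Ω x₀ → ψ x₀ ≤ lagrangianAngle n (hessian n φ x₀)

def ViscositySupersolution (n : ℕ) (Ω : Set (Euc n)) (u ψ : Euc n → ℝ) : Prop :=
  ∀ φ : Euc n → ℝ, ContDiff ℝ 2 φ → ∀ x₀ ∈ Ω,
    IsLocalMinOn (fun x => u x - φ x) Ω x₀ → lagrangianAngle n (hessian n φ x₀) ≤ ψ x₀

def ViscositySolution (n : ℕ) (Ω : Set (Euc n)) (u ψ : Euc n → ℝ) : Prop :=
  ViscositySubsolution n Ω u ψ ∧ ViscositySupersolution n Ω u ψ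

/-- `u ∈ C^{k,α}(Ω)`: `u` is `k` times continuously differentiable on `Ω` and `D^k u`
is locally `α`-Hölder continuous on `Ω`. -/
def IsCkHolderOn (n k : ℕ) (α : ℝ) (u : Euc n → ℝ) (Ω : Set (Euc n)) : Prop :=
  ContDiffOn ℝ k u Ω ∧
  ∀ x ∈ Ω, ∃ U ∈ 𝓝[Ω] x, ∃ C : ℝ≥0,
    HolderOnWith C α.toNNReal (iteratedFDerivWithin ℝ k u Ω) U

/-- The subdifferential of `w` at `x`, relative to the domain `Ω`. -/
def subdiff (n : ℕ) (Ω : Set (Euc n)) (w : Euc n → ℝ) (x : Euc n) : Set (Euc n) :=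
  {p | ∀ y ∈ Ω, w x + ⟪p, y - x⟫ ≤ w y}

/-- `∂w(Ω) = ⋃_{x ∈ Ω} ∂w(x)`. -/
def subdiffImage (n : ℕ) (Ω : Set (Euc n)) (w : Euc n → ℝ) : Set (Euc n) :=
  ⋃ x ∈ Ω, subdiff n Ω w x

/-- `ũ(x) = s·u(x) + (c/2)|x|²` with `c = s = 1/√2`. -/
noncomputable def tildePot (n : ℕ) (u : Euc n → ℝ) : Euc n → ℝ :=
  fun x => (Real.sqrt 2)⁻¹ * u x + (2 * Real.sqrt 2)⁻¹ * ‖x‖ ^ 2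

/-- The Legendre transform `f*(p) = sup_{x ∈ Ω} (⟨x, p⟩ − f(x))`. -/
noncomputable def legendreTransform (n : ℕ) (Ω : Set (Euc n)) (f : Euc n → ℝ) (p : Euc n) : ℝ :=
  sSup ((fun x => ⟪x, p⟫ - f x) '' Ω)

/-- The π/4-rotated potential `ū`, defined by `s·ū(p) − (c/2)|p|² = −ũ*(p)`. -/
noncomputable def rotPotential (n : ℕ) (Ω : Set (Euc n)) (u : Euc n → ℝ) : Euc n → ℝ :=
  fun p => Real.sqrt 2 *
    ((2 * Real.sqrt 2)⁻¹ * ‖p‖ ^ 2 - legendreTransform n Ω (tildePot n u) p)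

/-- The VMO modulus `ω(r)` of `v` on `Ω`. -/
noncomputable def vmoModulus (n : ℕ) (Ω : Set (Euc n)) (v : Euc n → ℝ) (r : ℝ) : ℝ :=
  ⨆ x₀ ∈ Ω, ⨆ ρ ∈ Set.Ioc (0:ℝ) r,
    ⨍ x in Metric.ball x₀ ρ ∩ Ω, |v x - ⨍ y in Metric.ball x₀ ρ ∩ Ω, v y|

/-- `v ∈ VMO(Ω)`: the VMO modulus tends to `0` as `r → 0⁺`. -/
def IsVMO (n : ℕ) (Ω : Set (Euc n)) (v : Euc n → ℝ) : Prop :=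
  Tendsto (vmoModulus n Ω v) (𝓝[>] (0:ℝ)) (𝓝 0)

end

section AuxConcave
open Matrix Real Finset
open scoped RealInnerProductSpace

private lemma concaveOn_arctan_Ici : ConcaveOn ℝ (Set.Ici (0:ℝ)) Real.arctan := by
  have hderiv : ∀ x : ℝ, HasDerivAt (fun y : ℝ => 1 / (1 + y ^ 2)) (-(2*x) / ((1+x^2)^2)) x := by
    intro x
    have h0 : (1:ℝ) + x ^ 2 ≠ 0 := by positivity
    have h1 : HasDerivAt (fun y : ℝ => 1 + y ^ 2) (2*x) x := by
      simpa using ((hasDerivAt_pow 2 x).const_add 1)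
    have := (hasDerivAt_const x (1:ℝ)).div h1 h0
    convert this using 1
    exacts [rfl, rfl, rfl, by ring]
  refine concaveOn_of_deriv2_nonpos (convex_Ici 0) Real.continuous_arctan.continuousOn
    (Real.differentiable_arctan.differentiableOn) ?_ ?_
  · rw [Real.deriv_arctan]
    intro x _
    exact ((hderiv x).differentiableAt).differentiableWithinAt
  · intro x hx
    have hx' : 0 < x := by simpa using hx
    have : deriv^[2] Real.arctan x = deriv (deriv Real.arctan) x := rfl
    rw [this, Real.deriv_arctan, (hderiv x).deriv]
    apply div_nonpos_of_nonpos_of_nonneg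
    · nlinarith
    · positivity

private lemma quad_nonneg {n : ℕ} {M : Matrix (Fin n) (Fin n) ℝ} (hM : M.PosSemidef)
    (u : EuclideanSpace ℝ (Fin n)) : 0 ≤ ⟪u, Matrix.toEuclideanLin M u⟫ := by
  have := hM.dotProduct_mulVec_nonneg (⇑u)
  simpa [PiLp.inner_apply, dotProduct, Matrix.toEuclideanLin_apply, mul_comm] using this

private lemma quad_expand {n : ℕ} {M : Matrix (Fin n) (Fin n) ℝ} (hM : M.IsHermitian)
    (u : EuclideanSpace ℝ (Fin n)) :
    ⟪u, Matrix.toEuclideanLin M u⟫ =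
      ∑ j, (⟪hM.eigenvectorBasis j, u⟫)^2 * hM.eigenvalues j := by
  set v := hM.eigenvectorBasis
  set T := Matrix.toEuclideanLin M
  have hsym : ∀ x y : EuclideanSpace ℝ (Fin n), ⟪T x, y⟫ = ⟪x, T y⟫ :=
    (Matrix.isHermitian_iff_isSymmetric.1 hM)
  have hTv : ∀ j, T (v j) = hM.eigenvalues j • v j := by
    intro j
    have := hM.mulVec_eigenvectorBasis j
    ext k
    exact congrFun this k
  rw [← v.sum_inner_mul_inner u (T u)]
  refine Finset.sum_congr rfl fun j _ => ?_
  rw [← hsym (v j) u, hTv j, real_inner_smul_left, real_inner_comm u (v j)]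
  ring

private lemma peierls {n : ℕ} {M : Matrix (Fin n) (Fin n) ℝ} (hM : M.PosSemidef)
    (w : OrthonormalBasis (Fin n) ℝ (EuclideanSpace ℝ (Fin n))) :
    ∑ i, Real.arctan (hM.1.eigenvalues i) ≤
      ∑ i, Real.arctan ⟪w i, Matrix.toEuclideanLin M (w i)⟫ := by
  set v := hM.1.eigenvectorBasis with hv
  set lam := hM.1.eigenvalues with hlam
  set c : Fin n → Fin n → ℝ := fun i j => (⟪v j, w i⟫)^2 with hc
  have hc_nonneg : ∀ i j, 0 ≤ c i j := fun i j => sq_nonneg _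
  have norm_w : ∀ i, ⟪w i, w i⟫ = 1 := by
    intro i
    rw [real_inner_self_eq_norm_sq, w.orthonormal.1 i]; norm_num
  have norm_v : ∀ j, ⟪v j, v j⟫ = 1 := by
    intro j
    rw [real_inner_self_eq_norm_sq, v.orthonormal.1 j]; norm_num
  have hrow : ∀ i, ∑ j, c i j = 1 := by
    intro i
    calc ∑ j, c i j = ∑ j, ⟪w i, v j⟫ * ⟪v j, w i⟫ := by
          refine Finset.sum_congr rfl fun j _ => ?_
          show (⟪v j, w i⟫)^2 = _
          rw [sq, real_inner_comm (v j) (w i)]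
      _ = ⟪w i, w i⟫ := v.sum_inner_mul_inner (w i) (w i)
      _ = 1 := norm_w i
  have hcol : ∀ j, ∑ i, c i j = 1 := by
    intro j
    calc ∑ i, c i j = ∑ i, ⟪v j, w i⟫ * ⟪w i, v j⟫ := by
          refine Finset.sum_congr rfl fun i _ => ?_
          show (⟪v j, w i⟫)^2 = _
          rw [sq, real_inner_comm (w i) (v j)]
      _ = ⟪v j, v j⟫ := w.sum_inner_mul_inner (v j) (v j)
      _ = 1 := norm_v j
  have step : ∀ i, ∑ j, c i j * Real.arctan (lam j) ≤
      Real.arctan ⟪w i, Matrix.toEuclideanLin M (w i)⟫ := by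
    intro i
    rw [quad_expand hM.1 (w i)]
    have := concaveOn_arctan_Ici.le_map_sum (t := Finset.univ) (w := c i) (p := lam)
      (fun j _ => hc_nonneg i j) (hrow i) (fun j _ => hM.eigenvalues_nonneg j)
    simpa [smul_eq_mul] using this
  calc ∑ j, Real.arctan (lam j) = ∑ j, (∑ i, c i j) * Real.arctan (lam j) := by
        refine Finset.sum_congr rfl fun j _ => ?_
        rw [hcol j, one_mul]
    _ = ∑ i, ∑ j, c i j * Real.arctan (lam j) := by
        rw [Finset.sum_comm]
        exact Finset.sum_congr rfl fun j _ => by rw [Finset.sum_mul]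
    _ ≤ _ := Finset.sum_le_sum fun i _ => step i

end AuxConcave

/-- `F(A) = ∑ arctan λᵢ(A)` is concave on the cone of positive semidefinite
symmetric matrices. -/
theorem lagrangianAngle_concave_on_psd
    (n : ℕ) (A B : Matrix (Fin n) (Fin n) ℝ)
    (hA : A.PosSemidef) (hB : B.PosSemidef)
    (t : ℝ) (ht : t ∈ Set.Icc (0:ℝ) 1) :
    t * lagrangianAngle n A + (1 - t) * lagrangianAngle n B ≤
      lagrangianAngle n (t • A + (1 - t) • B) := by
  obtain ⟨ht0, ht1⟩ := ht
  have ht1' : (0:ℝ) ≤ 1 - t := by linarith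
  set C : Matrix (Fin n) (Fin n) ℝ := t • A + (1 - t) • B with hCdef
  have hC : C.IsHermitian := by
    show C.conjTranspose = C
    rw [hCdef, Matrix.conjTranspose_add, Matrix.conjTranspose_smul,
      Matrix.conjTranspose_smul, hA.1, hB.1, star_trivial, star_trivial]
  have unfoldF : ∀ (M : Matrix (Fin n) (Fin n) ℝ) (hM : M.IsHermitian),
      lagrangianAngle n M = ∑ i, Real.arctan (hM.eigenvalues i) := by
    intro M hM; rw [lagrangianAngle, dif_pos hM]
  set w := hC.eigenvectorBasis with hw
  have hTv : ∀ i, Matrix.toEuclideanLin C (w i) = hC.eigenvalues i • w i := by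
    intro i
    have := hC.mulVec_eigenvectorBasis i
    ext k
    exact congrFun this k
  have heig : ∀ i, ⟪w i, Matrix.toEuclideanLin C (w i)⟫ = hC.eigenvalues i := by
    intro i
    rw [hTv i, real_inner_smul_right, real_inner_self_eq_norm_sq, w.orthonormal.1 i]
    norm_num
  set qA : Fin n → ℝ := fun i => ⟪w i, Matrix.toEuclideanLin A (w i)⟫ with hqA
  set qB : Fin n → ℝ := fun i => ⟪w i, Matrix.toEuclideanLin B (w i)⟫ with hqB
  have hlin : ∀ i, (hC.eigenvalues i) = t * qA i + (1 - t) * qB i := by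
    intro i
    rw [← heig i]
    have h1 : Matrix.toEuclideanLin C (w i)
        = t • Matrix.toEuclideanLin A (w i) + (1 - t) • Matrix.toEuclideanLin B (w i) := by
      simp [hCdef, map_add, _root_.map_smul]
    rw [h1, inner_add_right, real_inner_smul_right, real_inner_smul_right]
  have hptwise : ∀ i, t * Real.arctan (qA i) + (1 - t) * Real.arctan (qB i) ≤
      Real.arctan (hC.eigenvalues i) := by
    intro i
    rw [hlin i]
    have := concaveOn_arctan_Ici.2 (quad_nonneg hA (w i)) (quad_nonneg hB (w i))
      ht0 ht1' (by ring)
    simpa [smul_eq_mul] using this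
  calc t * lagrangianAngle n A + (1 - t) * lagrangianAngle n B
      = t * ∑ i, Real.arctan (hA.1.eigenvalues i)
        + (1 - t) * ∑ i, Real.arctan (hB.1.eigenvalues i) := by
        rw [unfoldF A hA.1, unfoldF B hB.1]
    _ ≤ t * ∑ i, Real.arctan (qA i) + (1 - t) * ∑ i, Real.arctan (qB i) := by
        exact add_le_add (mul_le_mul_of_nonneg_left (peierls hA w) ht0)
          (mul_le_mul_of_nonneg_left (peierls hB w) ht1')
    _ = ∑ i, (t * Real.arctan (qA i) + (1 - t) * Real.arctan (qB i)) := by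
        rw [Finset.sum_add_distrib, Finset.mul_sum, Finset.mul_sum]
    _ ≤ ∑ i, Real.arctan (hC.eigenvalues i) := Finset.sum_le_sum fun i _ => hptwise i
    _ = lagrangianAngle n C := (unfoldF C hC).symm
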